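/- arXiv:1512.06310 — 2 statements merged into one kernel-verified Lean document; each statement's English description precedes it below -/
import Mathlib

section
/- For every integer n ≥ 1, the Schröder number S_n is even. -/
open Finset

/-- The (large) Schröder number `S n = ∑_{k=0}^n C(n,k)·C(n+k,k)/(k+1)`.
Each summand is an integer, so natural division is exact. -/
def schroeder (n : ℕ) : ℕ :=
  ∑ k ∈ Finset.range (n + 1), n.choose k * (n + k).choose k / (k + 1)

/-- Each summand of the Schröder sum equals `C(n+k, 2k) * catalan k`. -/
lemma schroeder_term_eq (n k : ℕ) (h : k ≤ n) :
    n.choose k * (n + k).choose k / (k + 1) = (n + k).choose (2 * k) * catalan k := by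
  have h1 : (n + k).choose (2 * k) * (2 * k).choose k
      = (n + k).choose k * (n + k - k).choose (2 * k - k) :=
    Nat.choose_mul (by omega)
  rw [Nat.add_sub_cancel, show 2 * k - k = k by omega] at h1
  have h2 : n.choose k * (n + k).choose k = (n + k).choose (2 * k) * ((k + 1) * catalan k) := by
    rw [succ_mul_catalan_eq_centralBinom, Nat.centralBinom, h1]; ring
  rw [h2, show (n + k).choose (2 * k) * ((k + 1) * catalan k)
      = (k + 1) * ((n + k).choose (2 * k) * catalan k) by ring,
    Nat.mul_div_cancel_left _ (Nat.succ_pos k)]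

lemma schroeder_eq_sum_catalan (n : ℕ) :
    schroeder n = ∑ k ∈ Finset.range (n + 1), (n + k).choose (2 * k) * catalan k := by
  unfold schroeder
  refine Finset.sum_congr rfl fun k hk => ?_
  exact schroeder_term_eq n k (by simpa [Nat.lt_succ_iff] using hk)

/-- The catalan numbers modulo 2. -/
def c2 (k : ℕ) : ZMod 2 := (catalan k : ZMod 2)

lemma zmod2_mul_self : ∀ x : ZMod 2, x * x = x := by decide

lemma c2_succ (n : ℕ) : c2 (n + 1) = if n % 2 = 0 then c2 (n / 2) else 0 := by
  have h : c2 (n + 1) = ∑ ij ∈ Finset.HasAntidiagonal.antidiagonal n, c2 ij.1 * c2 ij.2 := by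
    unfold c2; rw [catalan_succ']; push_cast; rfl
  rcases Nat.even_or_odd n with ⟨m, hm⟩ | ⟨m, hm⟩
  · have hmem : (m, m) ∈ Finset.HasAntidiagonal.antidiagonal n := by
      rw [Finset.HasAntidiagonal.mem_antidiagonal]; omega
    have hif : n % 2 = 0 := by omega
    have hdiv : n / 2 = m := by omega
    rw [h, ← Finset.sum_erase_add _ _ hmem, hif, if_pos rfl, hdiv]
    have hz : ∑ ij ∈ (Finset.HasAntidiagonal.antidiagonal n).erase (m, m), c2 ij.1 * c2 ij.2 = 0 := by
      apply Finset.sum_involution (fun a _ => a.swap)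
      · intro a _; rw [Prod.fst_swap, Prod.snd_swap, mul_comm]
        exact CharTwo.add_self_eq_zero _
      · intro a ha _
        simp only [Finset.mem_erase, Finset.HasAntidiagonal.mem_antidiagonal] at ha
        intro hc
        apply ha.1
        have h2 : a.2 = a.1 := congrArg Prod.fst hc
        have h1 : a.1 = m := by omega
        exact Prod.ext h1 (by omega)
      · intro a _; exact Prod.swap_swap a
      · intro a ha
        simp only [Finset.mem_erase, Finset.HasAntidiagonal.mem_antidiagonal] at ha ⊢
        refine ⟨?_, by simp [add_comm]; omega⟩
        intro hc
        apply ha.1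
        have h1 : a.1 = m := by
          have := congrArg Prod.snd hc
          simp at this
          omega
        exact Prod.ext h1 (by omega)
    rw [hz, zero_add, zmod2_mul_self]
  · rw [h, if_neg (by omega)]
    apply Finset.sum_involution (fun a _ => a.swap)
    · intro a _; rw [Prod.fst_swap, Prod.snd_swap, mul_comm]
      exact CharTwo.add_self_eq_zero _
    · intro a ha _
      rw [Finset.HasAntidiagonal.mem_antidiagonal] at ha
      intro hc
      have h2 : a.2 = a.1 := congrArg Prod.fst hc
      omega
    · intro a _; exact Prod.swap_swap a
    · intro a ha
      rw [Finset.HasAntidiagonal.mem_antidiagonal] at ha ⊢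
      simp; omega

lemma c2_zero : c2 0 = 1 := by unfold c2; norm_num

lemma c2_odd (b : ℕ) : c2 (2 * b + 1) = c2 b := by
  rw [c2_succ]; simp [Nat.mul_div_cancel_left, Nat.mul_mod_right]

lemma c2_even (b : ℕ) : c2 (2 * b) = if b = 0 then 1 else 0 := by
  match b with
  | 0 => simpa using c2_zero
  | b + 1 =>
    rw [show 2 * (b + 1) = (2 * b + 1) + 1 by ring, c2_succ, if_neg (by omega),
      if_neg (by omega)]

lemma lucas2 (n k : ℕ) :
    ((n.choose k : ZMod 2)) = (((n % 2).choose (k % 2) * ((n / 2).choose (k / 2)) : ℕ) : ZMod 2) :=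
  (ZMod.natCast_eq_natCast_iff _ _ _).mpr
    (Choose.choose_modEq_choose_mod_mul_choose_div_nat (p := 2))

lemma L1 (a b : ℕ) : (((2 * a).choose (2 * b) : ℕ) : ZMod 2) = ((a.choose b : ℕ) : ZMod 2) := by
  rw [lucas2]
  rw [show (2 * a) % 2 = 0 by omega, show (2 * b) % 2 = 0 by omega,
    show (2 * a) / 2 = a by omega, show (2 * b) / 2 = b by omega]
  simp

lemma L2 (a b : ℕ) : (((2 * a + 1).choose (2 * b) : ℕ) : ZMod 2) = ((a.choose b : ℕ) : ZMod 2) := by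
  rw [lucas2]
  rw [show (2 * a + 1) % 2 = 1 by omega, show (2 * b) % 2 = 0 by omega,
    show (2 * a + 1) / 2 = a by omega, show (2 * b) / 2 = b by omega]
  simp

lemma L3 (a b : ℕ) : (((2 * a).choose (2 * b + 1) : ℕ) : ZMod 2) = 0 := by
  rw [lucas2]
  rw [show (2 * a) % 2 = 0 by omega, show (2 * b + 1) % 2 = 1 by omega]
  simp

lemma L4 (a b : ℕ) :
    (((2 * a + 1).choose (2 * b + 1) : ℕ) : ZMod 2) = ((a.choose b : ℕ) : ZMod 2) := by
  rw [lucas2]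
  rw [show (2 * a + 1) % 2 = 1 by omega, show (2 * b + 1) % 2 = 1 by omega,
    show (2 * a + 1) / 2 = a by omega, show (2 * b + 1) / 2 = b by omega]
  simp

lemma sum_range_even_odd {M : Type*} [AddCommMonoid M] (f : ℕ → M) (n : ℕ) :
    ∑ k ∈ Finset.range (2 * n), f k =
      ∑ b ∈ Finset.range n, f (2 * b) + ∑ b ∈ Finset.range n, f (2 * b + 1) := by
  induction n with
  | zero => simp
  | succ n ih =>
    rw [show 2 * (n + 1) = 2 * n + 1 + 1 by ring, Finset.sum_range_succ f (2 * n + 1),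
      Finset.sum_range_succ f (2 * n), ih, Finset.sum_range_succ (fun b => f (2 * b)) n,
      Finset.sum_range_succ (fun b => f (2 * b + 1)) n]
    abel

def A2 (n : ℕ) : ZMod 2 := ∑ k ∈ Finset.range (n + 1), ((n + k).choose (2 * k) : ZMod 2) * c2 k

def B2 (n : ℕ) : ZMod 2 :=
  ∑ k ∈ Finset.range (n + 1), ((n + k).choose (2 * k + 1) : ZMod 2) * c2 k

lemma A2_ext (n M : ℕ) (h : n + 1 ≤ M) :
    ∑ k ∈ Finset.range M, ((n + k).choose (2 * k) : ZMod 2) * c2 k = A2 n := by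
  unfold A2
  refine (Finset.sum_subset (Finset.range_subset_range.mpr h) fun k hk hnk => ?_).symm
  simp only [Finset.mem_range] at hk hnk
  rw [Nat.choose_eq_zero_of_lt (by omega)]
  simp

lemma B2_ext (n M : ℕ) (h : n + 1 ≤ M) :
    ∑ k ∈ Finset.range M, ((n + k).choose (2 * k + 1) : ZMod 2) * c2 k = B2 n := by
  unfold B2
  refine (Finset.sum_subset (Finset.range_subset_range.mpr h) fun k hk hnk => ?_).symm
  simp only [Finset.mem_range] at hk hnk
  rw [Nat.choose_eq_zero_of_lt (by omega)]
  simp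

lemma B2_even (a : ℕ) : B2 (2 * a) = B2 a := by
  rw [← B2_ext (2 * a) (2 * (2 * a + 1)) (by omega), sum_range_even_odd]
  have h1 : ∑ b ∈ Finset.range (2 * a + 1),
      ((2 * a + 2 * b).choose (2 * (2 * b) + 1) : ZMod 2) * c2 (2 * b) = 0 := by
    refine Finset.sum_eq_zero fun b _ => ?_
    rw [show 2 * a + 2 * b = 2 * (a + b) by ring, L3]
    simp
  have h2 : ∑ b ∈ Finset.range (2 * a + 1),
      ((2 * a + (2 * b + 1)).choose (2 * (2 * b + 1) + 1) : ZMod 2) * c2 (2 * b + 1) = B2 a := by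
    rw [← B2_ext a (2 * a + 1) (by omega)]
    refine Finset.sum_congr rfl fun b _ => ?_
    rw [show 2 * a + (2 * b + 1) = 2 * (a + b) + 1 by ring, L4, c2_odd]
  rw [h1, h2, zero_add]

lemma B2_odd (a : ℕ) : B2 (2 * a + 1) = 1 := by
  rw [← B2_ext (2 * a + 1) (2 * (2 * a + 2)) (by omega), sum_range_even_odd]
  have h1 : ∑ b ∈ Finset.range (2 * a + 2),
      ((2 * a + 1 + 2 * b).choose (2 * (2 * b) + 1) : ZMod 2) * c2 (2 * b) = 1 := by
    have hterm : ∀ b ∈ Finset.range (2 * a + 2),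
        ((2 * a + 1 + 2 * b).choose (2 * (2 * b) + 1) : ZMod 2) * c2 (2 * b)
          = if b = 0 then 1 else 0 := by
      intro b _
      rw [show 2 * a + 1 + 2 * b = 2 * (a + b) + 1 by ring, L4, c2_even]
      by_cases hb : b = 0
      · subst hb; simp
      · simp [hb]
    rw [Finset.sum_congr rfl hterm, Finset.sum_ite_eq' (Finset.range (2 * a + 2)) 0
      (fun _ => (1 : ZMod 2))]
    simp
  have h2 : ∑ b ∈ Finset.range (2 * a + 2),
      ((2 * a + 1 + (2 * b + 1)).choose (2 * (2 * b + 1) + 1) : ZMod 2) * c2 (2 * b + 1) = 0 := by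
    refine Finset.sum_eq_zero fun b _ => ?_
    rw [show 2 * a + 1 + (2 * b + 1) = 2 * (a + b + 1) by ring, L3]
    simp
  rw [h1, h2, add_zero]

lemma A2_even (a : ℕ) : A2 (2 * a) = 1 + B2 a := by
  rw [← A2_ext (2 * a) (2 * (2 * a + 1)) (by omega), sum_range_even_odd]
  have h1 : ∑ b ∈ Finset.range (2 * a + 1),
      ((2 * a + 2 * b).choose (2 * (2 * b)) : ZMod 2) * c2 (2 * b) = 1 := by
    have hterm : ∀ b ∈ Finset.range (2 * a + 1),
        ((2 * a + 2 * b).choose (2 * (2 * b)) : ZMod 2) * c2 (2 * b)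
          = if b = 0 then 1 else 0 := by
      intro b _
      rw [show 2 * a + 2 * b = 2 * (a + b) by ring, L1, c2_even]
      by_cases hb : b = 0
      · subst hb; simp
      · simp [hb]
    rw [Finset.sum_congr rfl hterm, Finset.sum_ite_eq' (Finset.range (2 * a + 1)) 0
      (fun _ => (1 : ZMod 2))]
    simp
  have h2 : ∑ b ∈ Finset.range (2 * a + 1),
      ((2 * a + (2 * b + 1)).choose (2 * (2 * b + 1)) : ZMod 2) * c2 (2 * b + 1) = B2 a := by
    rw [← B2_ext a (2 * a + 1) (by omega)]
    refine Finset.sum_congr rfl fun b _ => ?_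
    rw [show 2 * a + (2 * b + 1) = 2 * (a + b) + 1 by ring, L2, c2_odd]
  rw [h1, h2]

lemma A2_odd (a : ℕ) : A2 (2 * a + 1) = 1 + B2 (a + 1) := by
  rw [← A2_ext (2 * a + 1) (2 * (2 * a + 2)) (by omega), sum_range_even_odd]
  have h1 : ∑ b ∈ Finset.range (2 * a + 2),
      ((2 * a + 1 + 2 * b).choose (2 * (2 * b)) : ZMod 2) * c2 (2 * b) = 1 := by
    have hterm : ∀ b ∈ Finset.range (2 * a + 2),
        ((2 * a + 1 + 2 * b).choose (2 * (2 * b)) : ZMod 2) * c2 (2 * b)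
          = if b = 0 then 1 else 0 := by
      intro b _
      rw [show 2 * a + 1 + 2 * b = 2 * (a + b) + 1 by ring, L2, c2_even]
      by_cases hb : b = 0
      · subst hb; simp
      · simp [hb]
    rw [Finset.sum_congr rfl hterm, Finset.sum_ite_eq' (Finset.range (2 * a + 2)) 0
      (fun _ => (1 : ZMod 2))]
    simp
  have h2 : ∑ b ∈ Finset.range (2 * a + 2),
      ((2 * a + 1 + (2 * b + 1)).choose (2 * (2 * b + 1)) : ZMod 2) * c2 (2 * b + 1)
        = B2 (a + 1) := by
    rw [← B2_ext (a + 1) (2 * a + 2) (by omega)]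
    refine Finset.sum_congr rfl fun b _ => ?_
    rw [show 2 * a + 1 + (2 * b + 1) = 2 * (a + 1 + b) by ring, L1, c2_odd]
  rw [h1, h2]

lemma B2_pos : ∀ n, 1 ≤ n → B2 n = 1 := by
  intro n
  induction n using Nat.strong_induction_on with
  | _ n ih =>
    intro hn
    rcases Nat.even_or_odd n with ⟨a, ha⟩ | ⟨a, ha⟩
    · rw [show n = 2 * a by omega, B2_even]
      exact ih a (by omega) (by omega)
    · rw [show n = 2 * a + 1 by omega, B2_odd]

lemma schroeder_cast (n : ℕ) : ((schroeder n : ℕ) : ZMod 2) = A2 n := by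
  unfold A2 c2
  rw [schroeder_eq_sum_catalan]
  push_cast
  rfl

theorem schroeder_even (n : ℕ) (hn : 1 ≤ n) : Even (schroeder n) := by
  have h : ((schroeder n : ℕ) : ZMod 2) = 0 := by
    rw [schroeder_cast]
    rcases Nat.even_or_odd n with ⟨a, ha⟩ | ⟨a, ha⟩
    · rw [show n = 2 * a by omega, A2_even, B2_pos a (by omega)]; decide
    · rw [show n = 2 * a + 1 by omega, A2_odd, B2_pos (a + 1) (by omega)]; decide
  rwa [ZMod.natCast_eq_zero_iff, ← even_iff_two_dvd] at h
end

section
/- For all integers n ≥ 5 and α ≥ 1 with 5 ≤ k ≤ n, if k ≥ 5 then k − ⌊log₂ k⌋ ≥ 3; consequently T(n+2^α, k) ≡ T(n, k) (mod 2^{α+3}) for all 5 ≤ k ≤ 2^α with k ≤ n. -/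
/-- `T n k = (1/n)·C(n,k)·C(n,k-1)·2^k`, which is `2^k` times the Narayana number.
The natural division is exact since `n ∣ C(n,k)·C(n,k-1)`. -/
def T (n k : ℕ) : ℕ := n.choose k * n.choose (k - 1) * 2 ^ k / n

section Aux

lemma lt_two_pow_sub_two' : ∀ k : ℕ, 5 ≤ k → k < 2 ^ (k - 2) := by
  intro k hk
  induction k with
  | zero => omega
  | succ n ih =>
    rcases Nat.lt_or_ge n 5 with h | h
    · interval_cases n <;> omega
    · have := ih (by omega)
      have h2 : n + 1 - 2 = (n - 2) + 1 := by omega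
      rw [h2, pow_succ]
      omega

lemma part1_aux {k : ℕ} (hk : 5 ≤ k) : 3 ≤ k - Nat.log 2 k := by
  have h1 : Nat.log 2 k < k - 2 :=
    Nat.log_lt_of_lt_pow (by omega) (lt_two_pow_sub_two' k hk)
  omega

lemma two_mul_add_two_le' (t : ℕ) (ht : 3 ≤ t) : 2 * t + 2 ≤ 2 ^ t := by
  induction t with
  | zero => omega
  | succ n ih =>
    rcases Nat.lt_or_ge n 3 with h | h
    · interval_cases n <;> omega
    · have := ih h
      rw [pow_succ]; omega

lemma exp_ineq' (k : ℕ) (hk : 5 ≤ k) : Nat.log 2 (k - 1) + k.factorization 2 + 3 ≤ k := by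
  set v := k.factorization 2 with hv
  have hk0 : k ≠ 0 := by omega
  have hproj : 2 ^ v ∣ k := Nat.ordProj_dvd k 2
  rcases Nat.eq_zero_or_pos v with hv0 | hv1
  · have hlt : k - 1 < 2 ^ (k - 2) := by
      have := lt_two_pow_sub_two' k hk; omega
    have hlog : Nat.log 2 (k - 1) < k - 2 := Nat.log_lt_of_lt_pow (by omega) hlt
    omega
  · set m := ordCompl[2] k with hmdef
    have hm : 2 ^ v * m = k := Nat.ordProj_mul_ordCompl_eq_self k 2
    have hm1 : 1 ≤ m := by
      rcases Nat.eq_zero_or_pos m with h | h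
      · rw [h, mul_zero] at hm; omega
      · exact h
    rcases eq_or_lt_of_le hm1 with h1 | h2
    · have hkpow : k = 2 ^ v := by rw [← hm, ← h1, mul_one]
      have hv3 : 3 ≤ v := by
        by_contra hcon
        push_neg at hcon
        interval_cases v <;> norm_num at hkpow <;> omega
      have hL : Nat.log 2 (k - 1) = v - 1 := by
        apply Nat.log_eq_of_pow_le_of_lt_pow
        · have : 2 ^ (v - 1) < 2 ^ v := Nat.pow_lt_pow_right one_lt_two (by omega)
          omega
        · have e : v - 1 + 1 = v := by omega
          rw [e]; omega
      have h2v : 2 * v + 2 ≤ 2 ^ v := two_mul_add_two_le' v hv3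
      omega
    · have h2v1 : 2 ^ (v + 1) ≤ k := by
        calc 2 ^ (v + 1) = 2 ^ v * 2 := by ring
          _ ≤ 2 ^ v * m := Nat.mul_le_mul_left _ h2
          _ = k := hm
      have hvl : v + 1 ≤ Nat.log 2 k := (Nat.le_log_iff_pow_le one_lt_two hk0).2 h2v1
      have hLl : Nat.log 2 (k - 1) ≤ Nat.log 2 k := Nat.log_mono_right (by omega)
      rcases Nat.lt_or_ge (Nat.log 2 k) 3 with h3 | h3
      · have hkeven : 2 ∣ k := dvd_trans (dvd_pow_self 2 (by omega)) hproj
        omega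
      · have hpl : 2 ^ Nat.log 2 k ≤ k := Nat.pow_log_le_self 2 hk0
        have h2l : 2 * Nat.log 2 k + 2 ≤ 2 ^ Nat.log 2 k := two_mul_add_two_le' _ h3
        omega

lemma pow_dvd_choose_mul' (a i : ℕ) (hi : 1 ≤ i) : 2 ^ a ∣ (2 ^ a).choose i * i := by
  obtain ⟨j, rfl⟩ : ∃ j, i = j + 1 := ⟨i - 1, by omega⟩
  obtain ⟨m, hm⟩ : ∃ m, 2 ^ a = m + 1 := ⟨2 ^ a - 1, by have := Nat.one_le_two_pow (n := a); omega⟩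
  rw [hm, ← Nat.add_one_mul_choose_eq]
  exact Dvd.intro _ rfl

lemma fact_le_log' (i : ℕ) (hi : 1 ≤ i) : i.factorization 2 ≤ Nat.log 2 i := by
  have h1 : 2 ^ (i.factorization 2) ∣ i := Nat.ordProj_dvd i 2
  have h2 : 2 ^ (i.factorization 2) ≤ i := Nat.le_of_dvd (by omega) h1
  exact (Nat.le_log_iff_pow_le (by norm_num) (by omega)).2 h2

lemma pow_dvd_central_choose' (a i j : ℕ) (hi : 1 ≤ i) (hij : i ≤ j) (hia : i ≤ 2 ^ a) :
    2 ^ (a - Nat.log 2 j) ∣ (2 ^ a).choose i := by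
  have hC : (2 ^ a).choose i ≠ 0 := (Nat.choose_pos hia).ne'
  have hdvd := pow_dvd_choose_mul' a i hi
  have hne : (2 ^ a).choose i * i ≠ 0 := by positivity
  have h1 : a ≤ ((2 ^ a).choose i * i).factorization 2 :=
    (Nat.Prime.pow_dvd_iff_le_factorization Nat.prime_two hne).1 hdvd
  rw [Nat.factorization_mul hC (by omega), Finsupp.add_apply] at h1
  have h2 : i.factorization 2 ≤ Nat.log 2 j :=
    (fact_le_log' i hi).trans (Nat.log_mono_right hij)
  have h3 : a - Nat.log 2 j ≤ ((2 ^ a).choose i).factorization 2 := by omega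
  exact (Nat.Prime.pow_dvd_iff_le_factorization Nat.prime_two hC).2 h3

lemma choose_shift' (n a j : ℕ) :
    (n + 2 ^ a).choose j ≡ n.choose j [MOD 2 ^ (a - Nat.log 2 j)] := by
  rw [Nat.add_choose_eq]
  have hmem : ((j, 0) : ℕ × ℕ) ∈ Finset.HasAntidiagonal.antidiagonal j := by simp
  rw [← Finset.add_sum_erase _ _ hmem]
  simp only [Nat.choose_zero_right, mul_one]
  have hdvd : 2 ^ (a - Nat.log 2 j) ∣
      ∑ ij ∈ (Finset.HasAntidiagonal.antidiagonal j).erase (j, 0), n.choose ij.1 * (2 ^ a).choose ij.2 := by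
    apply Finset.dvd_sum
    intro ij hij
    obtain ⟨hne, hmem'⟩ := Finset.mem_erase.1 hij
    rw [Finset.HasAntidiagonal.mem_antidiagonal] at hmem'
    have hy : 1 ≤ ij.2 := by
      rcases Nat.eq_zero_or_pos ij.2 with h | h
      · exfalso; apply hne; have h1 : ij.1 = j := by omega
        exact Prod.ext h1 h
      · exact h
    apply Dvd.dvd.mul_left
    rcases le_or_gt ij.2 (2 ^ a) with h | h
    · exact pow_dvd_central_choose' a ij.2 j hy (by omega) h
    · rw [Nat.choose_eq_zero_of_lt h]; exact dvd_zero _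
  calc n.choose j + ∑ ij ∈ (Finset.HasAntidiagonal.antidiagonal j).erase (j, 0),
        n.choose ij.1 * (2 ^ a).choose ij.2
      ≡ n.choose j + 0 [MOD 2 ^ (a - Nat.log 2 j)] :=
        Nat.ModEq.add_left _ ((Nat.modEq_zero_iff_dvd).2 hdvd)
    _ = n.choose j := by omega

lemma coprime_succ' (n : ℕ) : Nat.Coprime (n + 1) n := by
  have h := Nat.dvd_sub (Nat.gcd_dvd_left (n + 1) n) (Nat.gcd_dvd_right (n + 1) n)
  simp only [Nat.add_sub_cancel_left] at h
  exact Nat.dvd_one.mp (by simpa using h)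

lemma n_mul_choose' (n k : ℕ) (hk : 1 ≤ k) (hkn : k ≤ n) :
    n * (n - 1).choose (k - 1) = n.choose k * k := by
  obtain ⟨n', rfl⟩ : ∃ n', n = n' + 1 := ⟨n - 1, by omega⟩
  obtain ⟨k', rfl⟩ : ∃ k', k = k' + 1 := ⟨k - 1, by omega⟩
  simpa using Nat.add_one_mul_choose_eq n' k'

lemma n_dvd_choose_mul' (n k : ℕ) (hk : 2 ≤ k) (hkn : k ≤ n) :
    n ∣ n.choose k * n.choose (k - 1) := by
  set d := Nat.gcd n k with hd
  have hdpos : 0 < d := Nat.gcd_pos_of_pos_right _ (by omega)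
  have hdn : d ∣ n := Nat.gcd_dvd_left n k
  have hdk : d ∣ k := Nat.gcd_dvd_right n k
  set n' := n / d with hn'
  have hnn' : n = n' * d := (Nat.div_mul_cancel hdn).symm
  set k' := k / d with hk'
  have hkk' : k = k' * d := (Nat.div_mul_cancel hdk).symm
  have hcop : Nat.Coprime n' k' := Nat.coprime_div_gcd_div_gcd hdpos
  have h1 : k * n.choose k = n * (n - 1).choose (k - 1) := by
    rw [n_mul_choose' n k (by omega) hkn]; ring
  have h1' : k' * n.choose k = n' * (n - 1).choose (k - 1) := by
    have hh : d * (k' * n.choose k) = d * (n' * (n - 1).choose (k - 1)) := by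
      calc d * (k' * n.choose k) = (k' * d) * n.choose k := by ring
        _ = n * (n - 1).choose (k - 1) := by rw [← hkk']; exact h1
        _ = d * (n' * (n - 1).choose (k - 1)) := by rw [hnn']; ring
    exact Nat.eq_of_mul_eq_mul_left hdpos hh
  have hn'dvd : n' ∣ n.choose k := by
    apply Nat.Coprime.dvd_of_dvd_mul_left hcop
    exact ⟨(n - 1).choose (k - 1), by rw [mul_comm] at h1' ⊢; exact h1'⟩
  have h2 : n * (n - 1).choose (k - 2) = n.choose (k - 1) * (k - 1) := by
    have hh := n_mul_choose' n (k - 1) (by omega) (by omega)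
    have e : k - 1 - 1 = k - 2 := by omega
    rwa [e] at hh
  have hcopd : Nat.Coprime d (k - 1) := by
    have h3 : Nat.Coprime k (k - 1) := by
      have e : k = (k - 1) + 1 := by omega
      rw [e]; exact coprime_succ' (k - 1)
    exact Nat.Coprime.coprime_dvd_left hdk h3
  have hddvd : d ∣ n.choose (k - 1) := by
    apply Nat.Coprime.dvd_of_dvd_mul_right hcopd
    rw [← h2]
    exact hdn.trans ⟨(n - 1).choose (k - 2), rfl⟩
  have hfin : n' * d ∣ n.choose k * n.choose (k - 1) := mul_dvd_mul hn'dvd hddvd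
  rwa [← hnn'] at hfin

lemma T_mul_k' (n k : ℕ) (hk : 2 ≤ k) (hkn : k ≤ n) :
    T n k * k = (n - 1).choose (k - 1) * n.choose (k - 1) * 2 ^ k := by
  have hn : 0 < n := by omega
  have hdvd : n ∣ n.choose k * n.choose (k - 1) * 2 ^ k :=
    Dvd.dvd.mul_right (n_dvd_choose_mul' n k hk hkn) _
  have hT : T n k * n = n.choose k * n.choose (k - 1) * 2 ^ k := Nat.div_mul_cancel hdvd
  have h1 : n * (n - 1).choose (k - 1) = n.choose k * k := n_mul_choose' n k (by omega) hkn
  apply Nat.eq_of_mul_eq_mul_left hn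
  calc n * (T n k * k) = (T n k * n) * k := by ring
    _ = n.choose k * n.choose (k - 1) * 2 ^ k * k := by rw [hT]
    _ = (n.choose k * k) * (n.choose (k - 1) * 2 ^ k) := by ring
    _ = (n * (n - 1).choose (k - 1)) * (n.choose (k - 1) * 2 ^ k) := by rw [← h1]
    _ = n * ((n - 1).choose (k - 1) * n.choose (k - 1) * 2 ^ k) := by ring

end Aux

theorem T_tail_shift (n α : ℕ) (hn : 5 ≤ n) (hα : 1 ≤ α) :
    (∀ k : ℕ, 5 ≤ k → 3 ≤ k - Nat.log 2 k)
      ∧ ∀ k : ℕ, 5 ≤ k → k ≤ 2 ^ α → k ≤ n →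
          T (n + 2 ^ α) k ≡ T n k [MOD 2 ^ (α + 3)] := by
  constructor
  · intro k hk; exact part1_aux hk
  · intro k hk5 hk2a hkn
    set N := n + 2 ^ α with hN
    set L := Nat.log 2 (k - 1) with hLdef
    set v := k.factorization 2 with hvdef
    have hexp : L + v + 3 ≤ k := exp_ineq' k hk5
    have hLa : L < α := Nat.log_lt_of_lt_pow (by omega) (by omega)
    have hA : ((n - 1) + 2 ^ α).choose (k - 1) ≡ (n - 1).choose (k - 1) [MOD 2 ^ (α - L)] :=
      choose_shift' (n - 1) α (k - 1)
    have hB : (n + 2 ^ α).choose (k - 1) ≡ n.choose (k - 1) [MOD 2 ^ (α - L)] :=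
      choose_shift' n α (k - 1)
    have hAB := ((hA.mul hB).mul_right' (2 ^ k))
    have hT1 : T N k * k = (N - 1).choose (k - 1) * N.choose (k - 1) * 2 ^ k :=
      T_mul_k' N k (by omega) (by omega)
    have hT2 : T n k * k = (n - 1).choose (k - 1) * n.choose (k - 1) * 2 ^ k :=
      T_mul_k' n k (by omega) hkn
    have eN : N - 1 = (n - 1) + 2 ^ α := by omega
    have hTT : T N k * k ≡ T n k * k [MOD 2 ^ (α - L) * 2 ^ k] := by
      rw [hT1, hT2, eN]
      exact hAB
    have hmod2 : T N k * k ≡ T n k * k [MOD 2 ^ (α + 3 + v)] := by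
      apply Nat.ModEq.of_dvd _ hTT
      rw [← pow_add]
      exact pow_dvd_pow 2 (by omega)
    have hk0 : k ≠ 0 := by omega
    have hm : 2 ^ v * (ordCompl[2] k) = k := Nat.ordProj_mul_ordCompl_eq_self k 2
    set m := ordCompl[2] k with hmd
    have hcop2 : Nat.Coprime 2 m := Nat.coprime_ordCompl Nat.prime_two hk0
    have hdvd : ((2 : ℤ) ^ (α + 3 + v)) ∣ (T n k * k : ℤ) - (T N k * k : ℤ) := by
      have hh := hmod2.dvd
      push_cast at hh
      exact_mod_cast hh
    have hfac : (T n k * k : ℤ) - (T N k * k : ℤ)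
        = (((T n k : ℤ) - (T N k : ℤ)) * (m : ℤ)) * 2 ^ v := by
      have hk' : (k : ℤ) = 2 ^ v * (m : ℤ) := by exact_mod_cast hm.symm
      push_cast
      rw [hk']
      ring
    have hdvd2 : ((2 : ℤ) ^ (α + 3)) ∣ ((T n k : ℤ) - (T N k : ℤ)) * (m : ℤ) := by
      rw [hfac, pow_add] at hdvd
      have h2v : ((2 : ℤ) ^ v) ≠ 0 := by positivity
      exact (mul_dvd_mul_iff_right h2v).1 hdvd
    have hcopI : IsCoprime ((2 : ℤ) ^ (α + 3)) ((m : ℤ)) := by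
      have hc : Nat.Coprime (2 ^ (α + 3)) m := Nat.Coprime.pow_left _ hcop2
      have hI := Nat.isCoprime_iff_coprime.mpr hc
      push_cast at hI
      exact hI
    have hfin : ((2 : ℤ) ^ (α + 3)) ∣ (T n k : ℤ) - (T N k : ℤ) :=
      hcopI.dvd_of_dvd_mul_right hdvd2
    apply Nat.modEq_of_dvd
    push_cast
    exact hfin
end
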